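/- For n ≥ 3, the n×n circulant matrix P = circ(P₁, P₂, ..., Pₙ) built from Pell numbers is invertible (has nonzero determinant over the rationals). -/

import Mathlib

def pell : ℕ → ℚ
  | 0 => 0
  | 1 => 1
  | n + 2 => 2 * pell (n + 1) + pell n

def pellLucas : ℕ → ℚ
  | 0 => 2
  | 1 => 2
  | n + 2 => 2 * pellLucas (n + 1) + pellLucas n

/-- Circulant matrix `circ (c₁, …, cₙ)` with `(i,j)` entry `c ((j - i mod n) + 1)`. -/
def circMat (n : ℕ) (c : ℕ → ℚ) : Matrix (Fin n) (Fin n) ℚ :=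
  fun i j => c ((j - i : Fin n).val + 1)

lemma pell_aux : ∀ k, 0 ≤ pell k ∧ 1 ≤ pell (k + 1)
  | 0 => by norm_num [pell]
  | k + 1 => by
    obtain ⟨h0, h1⟩ := pell_aux k
    refine ⟨by linarith, ?_⟩
    show (1 : ℚ) ≤ 2 * pell (k + 1) + pell k
    linarith

lemma pell_pos (k : ℕ) : 1 ≤ pell (k + 1) := (pell_aux k).2

lemma mod_wrap (n r s : ℕ) (h : s = n + r) (hr : r < n) : s % n = r := by
  subst h; rw [Nat.add_mod_left]; exact Nat.mod_eq_of_lt hr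

lemma mod_nowrap (n r s : ℕ) (h : s = r) (hr : r < n) : s % n = r := by
  subst h; exact Nat.mod_eq_of_lt hr

theorem circ_pell_invertible (n : ℕ) (hn : 3 ≤ n) : (circMat n pell).det ≠ 0 := by
  obtain ⟨m, rfl⟩ : ∃ m, n = m + 3 := ⟨n - 3, by omega⟩
  clear hn
  set u : Fin (m + 3) → ℚ := fun t => pell (t.val + 1) with hu
  have hM : circMat (m + 3) pell = Matrix.transpose (Matrix.circulant u) := by
    rw [Matrix.transpose_circulant]
    ext i j
    simp [circMat, hu]
  set i1 : Fin (m + 3) := ⟨1, by omega⟩ with hi1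
  set i2 : Fin (m + 3) := ⟨2, by omega⟩ with hi2
  set a : ℚ := pell (m + 4) - 1 with ha
  set b : ℚ := pell (m + 3) with hb
  set g : Fin (m + 3) → ℚ := Pi.single (0 : Fin (m + 3)) (-1) + Pi.single i1 2 + Pi.single i2 1
    with hg
  set w : Fin (m + 3) → ℚ := Pi.single (0 : Fin (m + 3)) a + Pi.single i1 b with hw
  set e : Fin (m + 3) → ℚ := fun k => (-b) ^ k.val * a ^ (m + 2 - k.val) with he
  set d : ℚ := a ^ (m + 3) - (-b) ^ (m + 3) with hd
  -- positivity facts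
  have hb1 : 1 ≤ b := pell_pos (m + 2)
  have hab : b < a := by
    have hrec : pell (m + 4) = 2 * pell (m + 3) + pell (m + 2) := by
      show pell (m + 2 + 2) = _
      simp [pell]
    have h2 := pell_pos (m + 1)
    rw [ha, hrec, hb]
    linarith
  have hd0 : d ≠ 0 := by
    have hbpos : (0 : ℚ) < b := by linarith
    have h1 : (-b) ^ (m + 3) ≤ b ^ (m + 3) := by
      calc (-b) ^ (m + 3) ≤ |(-b) ^ (m + 3)| := le_abs_self _
        _ = |(-b)| ^ (m + 3) := by rw [abs_pow]
        _ = b ^ (m + 3) := by rw [abs_neg, abs_of_pos hbpos]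
    have h2 : b ^ (m + 3) < a ^ (m + 3) :=
      pow_lt_pow_left₀ hab (le_of_lt hbpos) (by omega)
    rw [hd]; intro h; nlinarith
  -- step 1 : U * G = circulant w
  have hvec1 : (Matrix.circulant u).mulVec g = w := by
    funext i
    rw [hg, Matrix.mulVec_add, Matrix.mulVec_add, Matrix.mulVec_single, Matrix.mulVec_single,
      Matrix.mulVec_single]
    simp only [Pi.add_apply, Pi.smul_apply, Matrix.col_apply, op_smul_eq_mul,
      Matrix.circulant_apply, sub_zero]
    rcases i with ⟨iv, hiv⟩
    have hs1 : ((⟨iv, hiv⟩ : Fin (m + 3)) - i1).val = (m + 3 - 1 + iv) % (m + 3) := by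
      rw [Fin.sub_def]
    have hs2 : ((⟨iv, hiv⟩ : Fin (m + 3)) - i2).val = (m + 3 - 2 + iv) % (m + 3) := by
      rw [Fin.sub_def]
    match iv, hiv with
    | 0, hiv =>
      have e1 : (m + 3 - 1 + 0) % (m + 3) = m + 2 := mod_nowrap _ _ _ (by omega) (by omega)
      have e2 : (m + 3 - 2 + 0) % (m + 3) = m + 1 := mod_nowrap _ _ _ (by omega) (by omega)
      have hz : (Pi.single i1 b : Fin (m + 3) → ℚ) (0 : Fin (m + 3)) = 0 := by
        apply Pi.single_eq_of_ne
        simp [hi1, Fin.ext_iff]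
      rw [hw]
      simp only [Pi.add_apply, hu, hs1, hs2, e1, e2]
      rw [show (⟨0, hiv⟩ : Fin (m + 3)) = 0 from rfl, Pi.single_eq_same, hz]
      have hrec : pell (m + 4) = 2 * pell (m + 3) + pell (m + 2) := by
        show pell (m + 2 + 2) = _
        simp [pell]
      rw [show pell (m + 2 + 1) = pell (m + 3) by norm_num,
        show pell (m + 1 + 1) = pell (m + 2) by norm_num,
        show pell (0 + 1) = 1 from rfl, ha, hrec]
      ring
    | 1, hiv =>
      have e1 : (m + 3 - 1 + 1) % (m + 3) = 0 := mod_wrap _ _ _ (by omega) (by omega)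
      have e2 : (m + 3 - 2 + 1) % (m + 3) = m + 2 := mod_nowrap _ _ _ (by omega) (by omega)
      have hz : (Pi.single (0 : Fin (m + 3)) a : Fin (m + 3) → ℚ) ⟨1, hiv⟩ = 0 := by
        apply Pi.single_eq_of_ne
        simp [Fin.ext_iff]
      rw [hw]
      simp only [Pi.add_apply, hu, hs1, hs2, e1, e2]
      rw [hz, show (⟨1, hiv⟩ : Fin (m + 3)) = i1 from rfl, Pi.single_eq_same]
      rw [show pell (m + 2 + 1) = pell (m + 3) by norm_num,
        show pell (1 + 1) = 2 by norm_num [pell],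
        show pell (0 + 1) = 1 from rfl, hb]
      ring
    | (k + 2), hiv =>
      have e1 : (m + 3 - 1 + (k + 2)) % (m + 3) = k + 1 :=
        mod_wrap _ _ _ (by omega) (by omega)
      have e2 : (m + 3 - 2 + (k + 2)) % (m + 3) = k :=
        mod_wrap _ _ _ (by omega) (by omega)
      rw [hw]
      have h0 : (Pi.single (0 : Fin (m + 3)) a : Fin (m + 3) → ℚ) ⟨k + 2, hiv⟩ = 0 := by
        apply Pi.single_eq_of_ne; simp [Fin.ext_iff]
      have h1 : (Pi.single i1 b : Fin (m + 3) → ℚ) ⟨k + 2, hiv⟩ = 0 := by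
        apply Pi.single_eq_of_ne; simp [hi1, Fin.ext_iff]
      simp only [Pi.add_apply, h0, h1, hu, hs1, hs2, e1, e2]
      have hrec : pell (k + 1 + 2) = 2 * pell (k + 2) + pell (k + 1) := by simp [pell]
      rw [show k + 2 + 1 = k + 1 + 2 from rfl, hrec,
        show pell (k + 1 + 1) = pell (k + 2) by norm_num]
      ring
  have step1 : Matrix.circulant u * Matrix.circulant g = Matrix.circulant w := by
    rw [Matrix.circulant_mul, hvec1]
  -- step 2 : W * E = scalar d
  have hvec2 : (Matrix.circulant e).mulVec w = Pi.single (0 : Fin (m + 3)) d := by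
    funext i
    rw [hw, Matrix.mulVec_add, Matrix.mulVec_single, Matrix.mulVec_single]
    simp only [Pi.add_apply, Pi.smul_apply, Matrix.col_apply, op_smul_eq_mul,
      Matrix.circulant_apply, sub_zero]
    rcases i with ⟨iv, hiv⟩
    have hs1 : ((⟨iv, hiv⟩ : Fin (m + 3)) - i1).val = (m + 3 - 1 + iv) % (m + 3) := by
      rw [Fin.sub_def]
    match iv, hiv with
    | 0, hiv =>
      have e1 : (m + 3 - 1 + 0) % (m + 3) = m + 2 := mod_nowrap _ _ _ (by omega) (by omega)
      simp only [he, hs1, e1]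
      rw [show (⟨0, hiv⟩ : Fin (m + 3)) = 0 from rfl, Pi.single_eq_same, hd]
      have h2 : m + 2 - (m + 2) = 0 := by omega
      have h3 : m + 2 - 0 = m + 2 := rfl
      rw [h2, h3]
      have h4 : a ^ (m + 3) = a ^ (m + 2) * a := by rw [← pow_succ]
      have h5 : (-b) ^ (m + 3) = -((-b) ^ (m + 2) * b) := by
        rw [show m + 3 = (m + 2) + 1 from rfl, pow_succ]; ring
      rw [h4, h5]
      ring
    | (k + 1), hiv =>
      have e1 : (m + 3 - 1 + (k + 1)) % (m + 3) = k := mod_wrap _ _ _ (by omega) (by omega)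
      have hP : (Pi.single (0 : Fin (m + 3)) d : Fin (m + 3) → ℚ) ⟨k + 1, hiv⟩ = 0 := by
        apply Pi.single_eq_of_ne; simp [Fin.ext_iff]
      rw [hP]
      simp only [he, hs1, e1]
      rw [show m + 2 - k = (m + 2 - (k + 1)) + 1 by omega, pow_succ, pow_succ]
      ring
  have step2 : Matrix.circulant w * Matrix.circulant e = Matrix.scalar (Fin (m + 3)) d := by
    rw [Matrix.circulant_mul_comm, Matrix.circulant_mul, hvec2, Matrix.circulant_single]
  -- conclude
  have hdet : (Matrix.circulant u).det * ((Matrix.circulant g).det * (Matrix.circulant e).det)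
      = d ^ (m + 3) := by
    rw [← Matrix.det_mul, ← Matrix.det_mul, ← mul_assoc, step1, step2]
    rw [Matrix.scalar_apply, Matrix.det_diagonal]
    simp
  rw [hM, Matrix.det_transpose]
  intro h
  rw [h, zero_mul] at hdet
  exact hd0 (pow_eq_zero_iff (by omega) |>.mp hdet.symm)
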